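/- The function θ(x) = (2 ζ(x) Γ(x+1))^(1/x) is strictly log-concave on (7.1, ∞), i.e., (log θ(x))'' < 0 for all x > 7.1. -/

import Mathlib

noncomputable def zeta (x : ℝ) : ℝ := ∑' n : ℕ+, 1 / (n : ℝ) ^ x

noncomputable def theta (x : ℝ) : ℝ := (2 * zeta x * Real.Gamma (x + 1)) ^ (1 / x)

namespace ThetaAux
open Real Filter

/-- `c n = n+1 : ℝ`. -/
def c (n : ℕ) : ℝ := (n : ℝ) + 1

lemma c_pos (n : ℕ) : 0 < c n := by simp only [c]; positivity
lemma one_le_c (n : ℕ) : 1 ≤ c n := by simp [c]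
lemma log_c_nonneg (n : ℕ) : 0 ≤ Real.log (c n) := Real.log_nonneg (one_le_c n)

noncomputable def Zf (n : ℕ) (y : ℝ) : ℝ := Real.exp (-(y * Real.log (c n)))
noncomputable def Z1f (n : ℕ) (y : ℝ) : ℝ := Real.log (c n) * Zf n y
noncomputable def Z2f (n : ℕ) (y : ℝ) : ℝ := Real.log (c n) ^ 2 * Zf n y
noncomputable def Pf (n : ℕ) (y : ℝ) : ℝ :=
  y * Real.log (1 + 1 / c n) - Real.log (1 + y / c n)
noncomputable def P1f (n : ℕ) (y : ℝ) : ℝ := Real.log (1 + 1 / c n) - 1 / (c n + y)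
noncomputable def P2f (n : ℕ) (y : ℝ) : ℝ := 1 / (c n + y) ^ 2

noncomputable def Z (y : ℝ) : ℝ := ∑' n, Zf n y
noncomputable def Z1 (y : ℝ) : ℝ := ∑' n, Z1f n y
noncomputable def Z2 (y : ℝ) : ℝ := ∑' n, Z2f n y
noncomputable def P (y : ℝ) : ℝ := ∑' n, Pf n y
noncomputable def P1 (y : ℝ) : ℝ := ∑' n, P1f n y
noncomputable def P2 (y : ℝ) : ℝ := ∑' n, P2f n y

lemma Zf_nonneg (n : ℕ) (y : ℝ) : 0 ≤ Zf n y := (Real.exp_pos _).le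
lemma Z1f_nonneg (n : ℕ) (y : ℝ) : 0 ≤ Z1f n y :=
  mul_nonneg (log_c_nonneg n) (Zf_nonneg n y)
lemma Z2f_nonneg (n : ℕ) (y : ℝ) : 0 ≤ Z2f n y :=
  mul_nonneg (sq_nonneg _) (Zf_nonneg n y)

/-- exp(-(y log c)) ≤ 1/c^k when k ≤ y. -/
lemma Zf_le_pow (n : ℕ) (k : ℕ) {y : ℝ} (hy : (k : ℝ) ≤ y) : Zf n y ≤ 1 / c n ^ k := by
  have h1 : Zf n y ≤ Real.exp (-((k : ℝ) * Real.log (c n))) := by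
    apply Real.exp_le_exp.2
    have := log_c_nonneg n
    nlinarith
  have h2 : Real.exp (-((k : ℝ) * Real.log (c n))) = 1 / c n ^ k := by
    rw [Real.exp_neg, Real.exp_nat_mul, Real.exp_log (c_pos n), one_div]
  rw [← h2]; exact h1

lemma log_c_le (n : ℕ) : Real.log (c n) ≤ c n := by
  have := Real.log_le_sub_one_of_pos (c_pos n)
  linarith

/-- Summability of 1/(n+1)^k for k ≥ 2. -/
lemma summable_c_pow {k : ℕ} (hk : 2 ≤ k) : Summable (fun n : ℕ => 1 / c n ^ k) := by
  have h : Summable (fun n : ℕ => 1 / (n : ℝ) ^ k) :=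
    summable_one_div_nat_pow.2 hk
  have h2 := (summable_nat_add_iff 1).2 h
  refine h2.congr fun n => ?_
  have : ((n + 1 : ℕ) : ℝ) = c n := by simp [c]
  rw [this]

lemma summable_Zf {y : ℝ} (hy : 2 ≤ y) : Summable (fun n => Zf n y) := by
  refine Summable.of_nonneg_of_le (fun n => Zf_nonneg n y)
    (fun n => Zf_le_pow n 2 (by exact_mod_cast hy)) (summable_c_pow le_rfl)

lemma summable_Z1f {y : ℝ} (hy : 3 ≤ y) : Summable (fun n => Z1f n y) := by
  refine Summable.of_nonneg_of_le (fun n => Z1f_nonneg n y) (fun n => ?_)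
    (summable_c_pow (k := 2) le_rfl)
  have h1 : Zf n y ≤ 1 / c n ^ 3 := Zf_le_pow n 3 (by exact_mod_cast hy)
  have h2 : Real.log (c n) * Zf n y ≤ c n * (1 / c n ^ 3) :=
    mul_le_mul (log_c_le n) h1 (Zf_nonneg n y) (c_pos n).le
  have h3 : c n * (1 / c n ^ 3) = 1 / c n ^ 2 := by
    have hc : c n ≠ 0 := (c_pos n).ne'
    field_simp
  calc Z1f n y ≤ c n * (1 / c n ^ 3) := h2
    _ = 1 / c n ^ 2 := h3

lemma summable_Z2f {y : ℝ} (hy : 4 ≤ y) : Summable (fun n => Z2f n y) := by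
  refine Summable.of_nonneg_of_le (fun n => Z2f_nonneg n y) (fun n => ?_)
    (summable_c_pow (k := 2) le_rfl)
  have h1 : Zf n y ≤ 1 / c n ^ 4 := Zf_le_pow n 4 (by exact_mod_cast hy)
  have h2 : Real.log (c n) ^ 2 * Zf n y ≤ c n ^ 2 * (1 / c n ^ 4) := by
    apply mul_le_mul _ h1 (Zf_nonneg n y) (by positivity)
    exact pow_le_pow_left₀ (log_c_nonneg n) (log_c_le n) 2
  have h3 : c n ^ 2 * (1 / c n ^ 4) = 1 / c n ^ 2 := by
    have hc : c n ≠ 0 := (c_pos n).ne'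
    field_simp
  simp only [Z2f]; linarith

lemma log_add_one_le {t : ℝ} (ht : 0 ≤ t) : Real.log (1 + t) ≤ t := by
  have := Real.log_le_sub_one_of_pos (show (0:ℝ) < 1 + t by linarith)
  linarith

lemma log_add_one_ge {t : ℝ} (ht : 0 ≤ t) : t / (1 + t) ≤ Real.log (1 + t) := by
  have h1 : (0:ℝ) < 1 + t := by linarith
  have h2 := Real.log_le_sub_one_of_pos (show (0:ℝ) < (1+t)⁻¹ by positivity)
  rw [Real.log_inv] at h2
  have h3 : (1+t)⁻¹ - 1 = -(t/(1+t)) := by field_simp; ring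
  rw [h3] at h2
  linarith

lemma P1f_nonneg (n : ℕ) {y : ℝ} (hy : 1 ≤ y) : 0 ≤ P1f n y := by
  have hc := c_pos n
  have h1 : (1 / c n) / (1 + 1 / c n) ≤ Real.log (1 + 1 / c n) :=
    log_add_one_ge (by positivity)
  have h2 : (1 / c n) / (1 + 1 / c n) = 1 / (c n + 1) := by
    field_simp
  have h3 : 1 / (c n + y) ≤ 1 / (c n + 1) := by
    apply one_div_le_one_div_of_le (by linarith) (by linarith)
  rw [h2] at h1
  simp only [P1f]
  linarith

lemma P1f_le (n : ℕ) {y : ℝ} (hy : 0 ≤ y) : P1f n y ≤ y / c n ^ 2 := by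
  have hc := c_pos n
  have h1 : Real.log (1 + 1 / c n) ≤ 1 / c n := log_add_one_le (by positivity)
  have h2 : 1 / c n - 1 / (c n + y) = y / (c n * (c n + y)) := by
    field_simp
    ring
  have h3 : y / (c n * (c n + y)) ≤ y / c n ^ 2 := by
    apply div_le_div_of_nonneg_left hy (by positivity) ?_
    nlinarith
  simp only [P1f]
  linarith

lemma summable_P1f {y : ℝ} (hy : 1 ≤ y) : Summable (fun n => P1f n y) := by
  have : Summable (fun n : ℕ => y * (1 / c n ^ 2)) :=
    (summable_c_pow (k := 2) le_rfl).mul_left y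
  refine Summable.of_nonneg_of_le (fun n => P1f_nonneg n hy) (fun n => ?_) this
  have := P1f_le n (by linarith : (0:ℝ) ≤ y)
  calc P1f n y ≤ y / c n ^ 2 := this
    _ = y * (1 / c n ^ 2) := by ring

lemma summable_P2f {y : ℝ} (hy : 0 ≤ y) : Summable (fun n => P2f n y) := by
  refine Summable.of_nonneg_of_le (fun n => by simp only [P2f]; positivity) (fun n => ?_)
    (summable_c_pow (k := 2) le_rfl)
  have hc := c_pos n
  simp only [P2f]
  apply one_div_le_one_div_of_le (by positivity)
  nlinarith

lemma Pf_nonneg (n : ℕ) {y : ℝ} (hy : 1 ≤ y) : 0 ≤ Pf n y := by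
  have hc := c_pos n
  have h0 : (0:ℝ) ≤ 1 / c n := by positivity
  have hs : (-1:ℝ) ≤ 1 / c n := by linarith
  have hb : 1 + y * (1 / c n) ≤ (1 + 1 / c n) ^ y :=
    one_add_mul_self_le_rpow_one_add hs hy
  have h1 : (0:ℝ) < 1 + y / c n := by positivity
  have h2 : Real.log (1 + y / c n) ≤ Real.log ((1 + 1 / c n) ^ y) := by
    apply Real.log_le_log h1
    calc 1 + y / c n = 1 + y * (1 / c n) := by ring
      _ ≤ _ := hb
  rw [Real.log_rpow (by positivity)] at h2
  simp only [Pf]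
  linarith

lemma Pf_le (n : ℕ) {y : ℝ} (hy : 0 ≤ y) : Pf n y ≤ y ^ 2 / c n ^ 2 := by
  have hc := c_pos n
  have h1 : Real.log (1 + 1 / c n) ≤ 1 / c n := log_add_one_le (by positivity)
  have h2 : (y / c n) / (1 + y / c n) ≤ Real.log (1 + y / c n) :=
    log_add_one_ge (by positivity)
  have h3 : (y / c n) / (1 + y / c n) = y / (c n + y) := by
    field_simp
  have h4 : y * (1 / c n) - y / (c n + y) = y ^ 2 / (c n * (c n + y)) := by
    field_simp; ring
  have h5 : y ^ 2 / (c n * (c n + y)) ≤ y ^ 2 / c n ^ 2 := by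
    apply div_le_div_of_nonneg_left (by positivity) (by positivity) ?_
    nlinarith
  simp only [Pf]
  rw [h3] at h2
  nlinarith [mul_le_mul_of_nonneg_left h1 hy]

lemma summable_Pf {y : ℝ} (hy : 1 ≤ y) : Summable (fun n => Pf n y) := by
  have : Summable (fun n : ℕ => y ^ 2 * (1 / c n ^ 2)) :=
    (summable_c_pow (k := 2) le_rfl).mul_left _
  refine Summable.of_nonneg_of_le (fun n => Pf_nonneg n hy) (fun n => ?_) this
  calc Pf n y ≤ y ^ 2 / c n ^ 2 := Pf_le n (by linarith)
    _ = y ^ 2 * (1 / c n ^ 2) := by ring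

/- ### Derivatives of the terms -/

lemma hasDerivAt_Zf (n : ℕ) (y : ℝ) : HasDerivAt (Zf n) (-Z1f n y) y := by
  have h1 : HasDerivAt (fun t : ℝ => -(t * Real.log (c n))) (-Real.log (c n)) y := by
    simpa using ((hasDerivAt_id y).mul_const (Real.log (c n))).fun_neg
  have := h1.exp
  exact (by simpa [Z1f, Zf, mul_comm] using this :
    HasDerivAt (fun t => Real.exp (-(t * Real.log (c n)))) (-Z1f n y) y)

lemma hasDerivAt_Z1f (n : ℕ) (y : ℝ) : HasDerivAt (Z1f n) (-Z2f n y) y := by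
  have h := (hasDerivAt_Zf n y).const_mul (Real.log (c n))
  have h2 : HasDerivAt (fun t => Real.log (c n) * Zf n t) (-Z2f n y) y := by
    refine h.congr_deriv ?_
    simp only [Z1f, Z2f]
    ring
  exact h2

lemma hasDerivAt_Pf (n : ℕ) {y : ℝ} (hy : 0 < y) : HasDerivAt (Pf n) (P1f n y) y := by
  have hc := c_pos n
  have h1 : HasDerivAt (fun t : ℝ => t * Real.log (1 + 1 / c n)) (Real.log (1 + 1 / c n)) y := by
    simpa using (hasDerivAt_id y).mul_const (Real.log (1 + 1 / c n))
  have h2 : HasDerivAt (fun t : ℝ => 1 + t / c n) (1 / c n) y := by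
    simpa [one_div] using ((hasDerivAt_id y).div_const (c n)).const_add 1
  have hne : 1 + y / c n ≠ 0 := by positivity
  have h3 := h2.log hne
  have h4 : (1 / c n) / (1 + y / c n) = 1 / (c n + y) := by
    rw [div_div]
    congr 1
    field_simp
  rw [h4] at h3
  have h5 : HasDerivAt (fun t : ℝ => t * Real.log (1 + 1 / c n) - Real.log (1 + t / c n))
      (Real.log (1 + 1 / c n) - 1 / (c n + y)) y := h1.sub h3
  exact h5

lemma hasDerivAt_P1f (n : ℕ) {y : ℝ} (hy : 0 < y) : HasDerivAt (P1f n) (P2f n y) y := by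
  have hc := c_pos n
  have hne : c n + y ≠ 0 := by positivity
  have h2 : HasDerivAt (fun t : ℝ => c n + t) 1 y := by
    simpa using (hasDerivAt_id y).const_add (c n)
  have h3 := h2.inv hne
  have h4 : HasDerivAt (fun t : ℝ => Real.log (1 + 1 / c n) - (c n + t)⁻¹)
      (-(-1 / (c n + y) ^ 2)) y := (h3.const_sub _)
  have : -(-1 / (c n + y) ^ 2) = P2f n y := by
    simp [P2f, neg_div, one_div]
  rw [this] at h4
  refine h4.congr_of_eventuallyEq ?_
  filter_upwards with t
  simp [P1f, one_div]

/- ### Telescoping sum -/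

lemma hasSum_tele : HasSum (fun n : ℕ => 1 / (c n * (c n + 1))) 1 := by
  have hnn : ∀ n : ℕ, (0:ℝ) ≤ 1 / (c n * (c n + 1)) := by
    intro n; have := c_pos n; positivity
  rw [hasSum_iff_tendsto_nat_of_nonneg hnn]
  have key : ∀ N : ℕ, ∑ i ∈ Finset.range N, 1 / (c i * (c i + 1)) = 1 - 1 / c N := by
    intro N
    have hterm : ∀ i : ℕ, 1 / (c i * (c i + 1)) = 1 / c i - 1 / c (i+1) := by
      intro i
      have h1 := c_pos i
      have h2 : c (i+1) = c i + 1 := by simp only [c]; push_cast; ring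
      rw [h2]
      have h3 : c i + 1 ≠ 0 := by positivity
      field_simp
      ring
    simp_rw [hterm]
    rw [Finset.sum_range_sub' (fun i => 1 / c i) N]
    simp [c]
  simp_rw [key]
  have h2 : Filter.Tendsto (fun N : ℕ => c N) atTop atTop :=
    Filter.tendsto_atTop_add_const_right _ 1 tendsto_natCast_atTop_atTop
  have h1 : Filter.Tendsto (fun N : ℕ => 1 / c N) atTop (nhds 0) := by
    simpa [one_div, Pi.inv_def] using h2.inv_tendsto_atTop
  have h3 := (tendsto_const_nhds (x := (1:ℝ)) (f := atTop)).sub h1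
  simpa using h3

lemma summable_tele : Summable (fun n : ℕ => 1 / (c n * (c n + 1))) := hasSum_tele.summable

/- ### Z ≥ 1 and zeta = Z -/

lemma one_le_Z {y : ℝ} (hy : 2 ≤ y) : 1 ≤ Z y := by
  have h0 : Zf 0 y = 1 := by simp [Zf, c]
  have := Summable.le_tsum (summable_Zf hy) 0 (fun j _ => Zf_nonneg j y)
  rw [h0] at this
  exact this

lemma Z_pos {y : ℝ} (hy : 2 ≤ y) : 0 < Z y := lt_of_lt_of_le one_pos (one_le_Z hy)

lemma zeta_eq_Z (y : ℝ) : zeta y = Z y := by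
  rw [zeta, Z]
  rw [← Equiv.pnatEquivNat.symm.tsum_eq (fun n : ℕ+ => 1 / (n : ℝ) ^ y)]
  congr 1
  ext n
  have h1 : ((Equiv.pnatEquivNat.symm n : ℕ+) : ℝ) = c n := by
    simp [Equiv.pnatEquivNat, c]
  rw [h1, Zf, Real.rpow_def_of_pos (c_pos n), Real.exp_neg, mul_comm, one_div]

/- ### P = log Gamma -/

lemma sum_Pf_eq {y : ℝ} (hy : 0 < y) {N : ℕ} (hN : 1 ≤ N) :
    ∑ i ∈ Finset.range N, Pf i y =
      Real.log (Real.GammaSeq (y+1) N) + y * (Real.log (c N) - Real.log N)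
        + (Real.log (y + 1 + N) - Real.log N) := by
  have hNp : (0:ℝ) < N := by exact_mod_cast hN
  -- rewrite each term
  have hterm : ∀ i : ℕ, Pf i y =
      y * (Real.log (c (i+1)) - Real.log (c i))
        - (Real.log (y + c i) - Real.log (c i)) := by
    intro i
    have h1 := c_pos i
    have e1 : 1 + 1 / c i = c (i+1) / c i := by
      have : c (i+1) = c i + 1 := by simp only [c]; push_cast; ring
      rw [this]; field_simp
    have e2 : 1 + y / c i = (y + c i) / c i := by field_simp; ring
    rw [Pf, e1, e2, Real.log_div (c_pos (i+1)).ne' h1.ne',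
      Real.log_div (by positivity) h1.ne']
  simp_rw [hterm]
  rw [Finset.sum_sub_distrib, ← Finset.mul_sum, Finset.sum_range_sub (fun i => Real.log (c i)),
    Finset.sum_sub_distrib]
  -- now handle GammaSeq
  have hgs : Real.log (Real.GammaSeq (y+1) N) =
      (y+1) * Real.log N + (∑ i ∈ Finset.range N, Real.log (c i))
        - ((∑ i ∈ Finset.range N, Real.log (y + c i)) + Real.log (y + 1 + N)) := by
    rw [Real.GammaSeq]
    have hfact : ((N.factorial : ℕ) : ℝ) = ∏ i ∈ Finset.range N, c i := by
      rw [← Finset.prod_range_add_one_eq_factorial]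
      push_cast
      exact Finset.prod_congr rfl (fun i _ => by simp [c])
    have hprodpos : ∀ j ∈ Finset.range (N+1), (y + 1 + (j:ℝ)) ≠ 0 := by
      intro j _
      positivity
    have hprodne : (∏ j ∈ Finset.range (N+1), ((y+1) + (j:ℝ))) ≠ 0 :=
      Finset.prod_ne_zero_iff.2 hprodpos
    rw [Real.log_div (by positivity) hprodne, Real.log_mul (by positivity) (by positivity),
      Real.log_rpow hNp, Real.log_prod hprodpos, hfact, Real.log_prod
        (fun i _ => (c_pos i).ne')]
    rw [Finset.sum_range_succ]
    have : ∀ i ∈ Finset.range N, Real.log (y + 1 + (i:ℝ)) = Real.log (y + c i) := by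
      intro i _
      congr 1
      simp only [c]
      ring
    rw [Finset.sum_congr rfl this]
  rw [hgs]
  have hc0 : c 0 = 1 := by simp [c]
  rw [hc0, Real.log_one]
  ring

lemma P_eq_logGamma {y : ℝ} (hy : 1 ≤ y) : P y = Real.log (Real.Gamma (y+1)) := by
  have hy0 : 0 < y := by linarith
  have hsum : Summable (fun n => Pf n y) := summable_Pf hy
  have hps : Filter.Tendsto (fun N => ∑ i ∈ Finset.range N, Pf i y) atTop (nhds (P y)) :=
    hsum.hasSum.tendsto_sum_nat
  have hGpos : 0 < Real.Gamma (y+1) := Real.Gamma_pos_of_pos (by linarith)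
  -- limit of log GammaSeq
  have h1 : Filter.Tendsto (fun N => Real.log (Real.GammaSeq (y+1) N)) atTop
      (nhds (Real.log (Real.Gamma (y+1)))) :=
    ((Real.continuousAt_log hGpos.ne').tendsto).comp (Real.GammaSeq_tendsto_Gamma (y+1))
  -- limit of the correction terms
  have hcast : Filter.Tendsto (fun N : ℕ => (N:ℝ)) atTop atTop := tendsto_natCast_atTop_atTop
  have hz : Filter.Tendsto (fun N : ℕ => 1 / (N:ℝ)) atTop (nhds 0) := by
    simpa [one_div, Pi.inv_def] using hcast.inv_tendsto_atTop
  have hlog1 : Filter.Tendsto (fun N : ℕ => Real.log (1 + 1 / (N:ℝ))) atTop (nhds 0) := by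
    have hc : ContinuousAt Real.log 1 := Real.continuousAt_log one_ne_zero
    have h2 : Filter.Tendsto (fun N : ℕ => 1 + 1 / (N:ℝ)) atTop (nhds 1) := by
      simpa using (tendsto_const_nhds (x := (1:ℝ)) (f := (atTop : Filter ℕ))).add hz
    simpa [Real.log_one, Function.comp_def] using hc.tendsto.comp h2
  have hza : Filter.Tendsto (fun N : ℕ => (y+1) / (N:ℝ)) atTop (nhds 0) := by
    have := hz.const_mul (y+1)
    simpa [div_eq_mul_inv, one_div, mul_comm] using this
  have hlog2 : Filter.Tendsto (fun N : ℕ => Real.log (1 + (y+1) / (N:ℝ))) atTop (nhds 0) := by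
    have hc : ContinuousAt Real.log 1 := Real.continuousAt_log one_ne_zero
    have h2 : Filter.Tendsto (fun N : ℕ => 1 + (y+1) / (N:ℝ)) atTop (nhds 1) := by
      simpa using (tendsto_const_nhds (x := (1:ℝ)) (f := (atTop : Filter ℕ))).add hza
    simpa [Real.log_one, Function.comp_def] using hc.tendsto.comp h2
  -- identify correction terms eventually
  have hev : ∀ᶠ N : ℕ in atTop, ∑ i ∈ Finset.range N, Pf i y =
      Real.log (Real.GammaSeq (y+1) N) + y * Real.log (1 + 1 / (N:ℝ))
        + Real.log (1 + (y+1) / (N:ℝ)) := by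
    filter_upwards [Filter.eventually_ge_atTop 1] with N hN
    rw [sum_Pf_eq hy0 hN]
    have hNp : (0:ℝ) < N := by exact_mod_cast hN
    have e1 : Real.log (c N) - Real.log N = Real.log (1 + 1 / (N:ℝ)) := by
      rw [← Real.log_div (c_pos N).ne' hNp.ne']
      congr 1
      simp only [c]
      field_simp
    have e2 : Real.log (y + 1 + N) - Real.log N = Real.log (1 + (y+1) / (N:ℝ)) := by
      rw [← Real.log_div (by positivity) hNp.ne']
      congr 1
      field_simp
      ring
    rw [e1, e2]
  have hlim : Filter.Tendsto (fun N => ∑ i ∈ Finset.range N, Pf i y) atTop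
      (nhds (Real.log (Real.Gamma (y+1)))) := by
    have h3 := (h1.add (hlog1.const_mul y)).add hlog2
    simp only [mul_zero, add_zero] at h3
    exact h3.congr' (hev.mono fun N hN => hN.symm)
  exact tendsto_nhds_unique hps hlim

/- ### term bounds -/

lemma Z1f_le {y : ℝ} (hy : 3 ≤ y) (n : ℕ) : Z1f n y ≤ 1 / c n ^ 2 := by
  have h1 : Zf n y ≤ 1 / c n ^ 3 := Zf_le_pow n 3 (by exact_mod_cast hy)
  have h2 : Real.log (c n) * Zf n y ≤ c n * (1 / c n ^ 3) :=
    mul_le_mul (log_c_le n) h1 (Zf_nonneg n y) (c_pos n).le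
  have h3 : c n * (1 / c n ^ 3) = 1 / c n ^ 2 := by
    have hc : c n ≠ 0 := (c_pos n).ne'
    field_simp
  simp only [Z1f]; linarith

lemma Z2f_le {y : ℝ} (hy : 4 ≤ y) (n : ℕ) : Z2f n y ≤ 1 / c n ^ 2 := by
  have h1 : Zf n y ≤ 1 / c n ^ 4 := Zf_le_pow n 4 (by exact_mod_cast hy)
  have h2 : Real.log (c n) ^ 2 * Zf n y ≤ c n ^ 2 * (1 / c n ^ 4) := by
    apply mul_le_mul _ h1 (Zf_nonneg n y) (by positivity)
    exact pow_le_pow_left₀ (log_c_nonneg n) (log_c_le n) 2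
  have h3 : c n ^ 2 * (1 / c n ^ 4) = 1 / c n ^ 2 := by
    have hc : c n ≠ 0 := (c_pos n).ne'
    field_simp
  simp only [Z2f]; linarith

lemma P2f_le {y : ℝ} (hy : 0 ≤ y) (n : ℕ) : P2f n y ≤ 1 / c n ^ 2 := by
  have hc := c_pos n
  simp only [P2f]
  apply one_div_le_one_div_of_le (by positivity)
  nlinarith

/- ### derivative of the sums -/

section DerivSums

variable {R : ℝ}

lemma y₀_mem (hR : 8 < R) : (7.5:ℝ) ∈ Set.Ioo (7:ℝ) R := by
  constructor <;> [norm_num; linarith]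

lemma hasDerivAt_Z (hR : 8 < R) {y : ℝ} (hy : y ∈ Set.Ioo (7:ℝ) R) : HasDerivAt Z (-Z1 y) y := by
  have key := hasDerivAt_tsum_of_isPreconnected
    (u := fun n : ℕ => 1 / c n ^ 2) (g := Zf) (g' := fun n z => -Z1f n z)
    (t := Set.Ioo (7:ℝ) R) (y₀ := 7.5) (y := y)
    (summable_c_pow le_rfl) isOpen_Ioo (convex_Ioo _ _).isPreconnected
    (fun n z _ => (hasDerivAt_Zf n z))
    (fun n z hz => by
      rw [norm_neg, Real.norm_eq_abs, abs_of_nonneg (Z1f_nonneg n z)]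
      exact Z1f_le (by linarith [hz.1]) n)
    (y₀_mem hR) (summable_Zf (by norm_num)) hy
  have : (∑' n, -Z1f n y) = -Z1 y := by
    rw [tsum_neg]; rfl
  rw [this] at key
  exact key

lemma hasDerivAt_Z1 (hR : 8 < R) {y : ℝ} (hy : y ∈ Set.Ioo (7:ℝ) R) : HasDerivAt Z1 (-Z2 y) y := by
  have key := hasDerivAt_tsum_of_isPreconnected
    (u := fun n : ℕ => 1 / c n ^ 2) (g := Z1f) (g' := fun n z => -Z2f n z)
    (t := Set.Ioo (7:ℝ) R) (y₀ := 7.5) (y := y)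
    (summable_c_pow le_rfl) isOpen_Ioo (convex_Ioo _ _).isPreconnected
    (fun n z _ => (hasDerivAt_Z1f n z))
    (fun n z hz => by
      rw [norm_neg, Real.norm_eq_abs, abs_of_nonneg (Z2f_nonneg n z)]
      exact Z2f_le (by linarith [hz.1]) n)
    (y₀_mem hR) (summable_Z1f (by norm_num)) hy
  have : (∑' n, -Z2f n y) = -Z2 y := by
    rw [tsum_neg]; rfl
  rw [this] at key
  exact key

lemma hasDerivAt_P (hR : 8 < R) {y : ℝ} (hy : y ∈ Set.Ioo (7:ℝ) R) : HasDerivAt P (P1 y) y := by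
  exact hasDerivAt_tsum_of_isPreconnected
    (u := fun n : ℕ => R * (1 / c n ^ 2)) (g := Pf) (g' := fun n z => P1f n z)
    (t := Set.Ioo (7:ℝ) R) (y₀ := 7.5) (y := y)
    ((summable_c_pow le_rfl).mul_left R) isOpen_Ioo (convex_Ioo _ _).isPreconnected
    (fun n z hz => (hasDerivAt_Pf n (by linarith [hz.1])))
    (fun n z hz => by
      rw [Real.norm_eq_abs, abs_of_nonneg (P1f_nonneg n (by linarith [hz.1]))]
      calc P1f n z ≤ z / c n ^ 2 := P1f_le n (by linarith [hz.1])
        _ ≤ R * (1 / c n ^ 2) := by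
            rw [mul_one_div]
            gcongr
            exact (hz.2).le)
    (y₀_mem hR) (summable_Pf (by norm_num)) hy

lemma hasDerivAt_P1 (hR : 8 < R) {y : ℝ} (hy : y ∈ Set.Ioo (7:ℝ) R) : HasDerivAt P1 (P2 y) y := by
  exact hasDerivAt_tsum_of_isPreconnected
    (u := fun n : ℕ => 1 / c n ^ 2) (g := P1f) (g' := fun n z => P2f n z)
    (t := Set.Ioo (7:ℝ) R) (y₀ := 7.5) (y := y)
    (summable_c_pow le_rfl) isOpen_Ioo (convex_Ioo _ _).isPreconnected
    (fun n z hz => (hasDerivAt_P1f n (by linarith [hz.1])))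
    (fun n z hz => by
      rw [Real.norm_eq_abs, abs_of_nonneg (by simp only [P2f]; positivity)]
      exact P2f_le (by linarith [hz.1]) n)
    (y₀_mem hR) (summable_P1f (by norm_num)) hy

end DerivSums

/- ### the function g and its derivatives -/

noncomputable def gg (y : ℝ) : ℝ := Real.log 2 + Real.log (Z y) + P y
noncomputable def dg (y : ℝ) : ℝ := -Z1 y / Z y + P1 y
noncomputable def ddg (y : ℝ) : ℝ := (Z2 y * Z y - Z1 y ^ 2) / Z y ^ 2 + P2 y

lemma hasDerivAt_gg {R : ℝ} (hR : 8 < R) {y : ℝ} (hy : y ∈ Set.Ioo (7:ℝ) R) :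
    HasDerivAt gg (dg y) y := by
  have hZp : 0 < Z y := Z_pos (by linarith [hy.1])
  have h1 := (hasDerivAt_Z hR hy).log hZp.ne'
  have h2 := hasDerivAt_P hR hy
  have h3 := (h1.const_add (Real.log 2)).add h2
  exact h3

lemma hasDerivAt_dg {R : ℝ} (hR : 8 < R) {y : ℝ} (hy : y ∈ Set.Ioo (7:ℝ) R) :
    HasDerivAt dg (ddg y) y := by
  have hZp : 0 < Z y := Z_pos (by linarith [hy.1])
  have hneg : HasDerivAt (fun z => -Z1 z) (Z2 y) y := by
    simpa using (hasDerivAt_Z1 hR hy).fun_neg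
  have hdiv := hneg.div (hasDerivAt_Z hR hy) hZp.ne'
  have h2 := hasDerivAt_P1 hR hy
  have h3 := hdiv.add h2
  have : (Z2 y * Z y - -Z1 y * -Z1 y) / Z y ^ 2 + P2 y = ddg y := by
    simp only [ddg]
    congr 1
    ring_nf
  rw [this] at h3
  exact h3

lemma log_theta_eq {y : ℝ} (hy : 2 ≤ y) : Real.log (theta y) = gg y / y := by
  have hZp : 0 < Z y := Z_pos hy
  have hG : 0 < Real.Gamma (y + 1) := Real.Gamma_pos_of_pos (by linarith)
  rw [theta, zeta_eq_Z, Real.log_rpow (by positivity),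
    Real.log_mul (by positivity) hG.ne', Real.log_mul two_ne_zero hZp.ne',
    ← P_eq_logGamma (by linarith : 1 ≤ y)]
  simp only [gg]
  ring

/- ### the function phi -/

noncomputable def phi (t : ℝ) : ℝ :=
  t ^ 2 / (1 + t) ^ 2 + 2 * t / (1 + t) - 2 * Real.log (1 + t)

lemma hasDerivAt_phi {t : ℝ} (ht : 0 ≤ t) :
    HasDerivAt phi (-(2 * t ^ 2) / (1 + t) ^ 3) t := by
  have hne : (1 + t) ≠ 0 := by positivity
  have h1 : HasDerivAt (fun s : ℝ => 1 + s) 1 t := by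
    simpa using (hasDerivAt_id t).const_add 1
  have hp2 : HasDerivAt (fun s : ℝ => (1 + s) ^ 2) (2 * (1 + t)) t := by
    have := h1.fun_pow 2
    simpa using this
  have hA : HasDerivAt (fun s : ℝ => s ^ 2 / (1 + s) ^ 2)
      ((2 * t * (1 + t) ^ 2 - t ^ 2 * (2 * (1 + t))) / ((1 + t) ^ 2) ^ 2) t := by
    have hnum : HasDerivAt (fun s : ℝ => s ^ 2) (2 * t) t := by
      simpa using hasDerivAt_pow 2 t
    exact hnum.div hp2 (pow_ne_zero 2 hne)
  have hB : HasDerivAt (fun s : ℝ => 2 * s / (1 + s))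
      ((2 * (1 + t) - 2 * t * 1) / (1 + t) ^ 2) t := by
    have hnum : HasDerivAt (fun s : ℝ => 2 * s) 2 t := by
      simpa using (hasDerivAt_id t).const_mul 2
    exact hnum.div h1 hne
  have hC : HasDerivAt (fun s : ℝ => 2 * Real.log (1 + s)) (2 * (1 / (1 + t))) t := by
    have := (h1.log hne).const_mul 2
    simpa [one_div] using this
  have h := (hA.add hB).sub hC
  have heq : (2 * t * (1 + t) ^ 2 - t ^ 2 * (2 * (1 + t))) / ((1 + t) ^ 2) ^ 2
      + (2 * (1 + t) - 2 * t * 1) / (1 + t) ^ 2 - 2 * (1 / (1 + t))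
      = -(2 * t ^ 2) / (1 + t) ^ 3 := by
    field_simp
    ring
  rw [heq] at h
  exact h

lemma phi_antitoneOn : AntitoneOn phi (Set.Ici 0) := by
  apply antitoneOn_of_deriv_nonpos (convex_Ici 0)
  · intro t ht
    exact (hasDerivAt_phi ht).continuousAt.continuousWithinAt
  · intro t ht
    rw [interior_Ici] at ht
    exact (hasDerivAt_phi (le_of_lt ht)).differentiableAt.differentiableWithinAt
  · intro t ht
    rw [interior_Ici] at ht
    rw [(hasDerivAt_phi (le_of_lt ht)).deriv]
    have h1 : (0:ℝ) < 1 + t := by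
      have := (Set.mem_Ioi.mp ht).le
      positivity
    apply div_nonpos_of_nonpos_of_nonneg (by nlinarith) (by positivity)

lemma phi_nonpos {t : ℝ} (ht : 0 ≤ t) : phi t ≤ 0 := by
  have h0 : phi 0 = 0 := by simp [phi]
  have := phi_antitoneOn (Set.self_mem_Ici) ht ht
  rw [h0] at this
  exact this

/- ### numeric exp/rpow bounds -/

lemma exp_neg_mul_log_le {d K : ℝ} (hd : 1 ≤ d) (hK : 0 < K) (h : K ^ 10 ≤ d ^ 71) :
    Real.exp (-(7.1 * Real.log d)) ≤ 1 / K := by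
  have hd0 : (0:ℝ) < d := by linarith
  have h1 : (d ^ ((7.1:ℝ))) ^ (10:ℕ) = d ^ (71:ℕ) := by
    rw [← Real.rpow_natCast (d ^ (7.1:ℝ)) 10, ← Real.rpow_mul hd0.le]
    rw [show ((7.1:ℝ) * (10:ℕ)) = ((71:ℕ):ℝ) by norm_num, Real.rpow_natCast]
  have h2 : K ≤ d ^ (7.1:ℝ) := by
    apply le_of_pow_le_pow_left₀ (n := 10) (by norm_num) (Real.rpow_nonneg hd0.le _)
    rw [h1]
    exact h
  have h3 : Real.exp (-(7.1 * Real.log d)) = (d ^ (7.1:ℝ))⁻¹ := by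
    rw [Real.rpow_def_of_pos hd0, ← Real.exp_neg]
    congr 1
    ring
  rw [h3, one_div]
  exact inv_anti₀ hK h2

lemma exp_71_log2 : Real.exp (-(7.1 * Real.log 2)) ≤ 1 / 136 :=
  exp_neg_mul_log_le (by norm_num) (by norm_num) (by norm_num)

lemma exp_71_log3 : Real.exp (-(7.1 * Real.log 3)) ≤ 1 / 2400 :=
  exp_neg_mul_log_le (by norm_num) (by norm_num) (by norm_num)

lemma exp_71_log4 : Real.exp (-(7.1 * Real.log 4)) ≤ 1 / 18000 :=
  exp_neg_mul_log_le (by norm_num) (by norm_num) (by norm_num)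

lemma log3_le : Real.log 3 ≤ 1.1362943616 := by
  have h1 : Real.log 3 = Real.log 4 + Real.log (3/4) := by
    rw [← Real.log_mul (by norm_num) (by norm_num)]
    norm_num
  have h2 : Real.log (3/4) ≤ 3/4 - 1 := Real.log_le_sub_one_of_pos (by norm_num)
  have h3 : Real.log 4 = 2 * Real.log 2 := by
    rw [show (4:ℝ) = 2 ^ 2 by norm_num, Real.log_pow]
    norm_num
  have h4 := Real.log_two_lt_d9
  rw [h1, h3]
  linarith

lemma log4_le : Real.log 4 ≤ 1.3862943616 := by
  have h3 : Real.log 4 = 2 * Real.log 2 := by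
    rw [show (4:ℝ) = 2 ^ 2 by norm_num, Real.log_pow]
    norm_num
  have h4 := Real.log_two_lt_d9
  rw [h3]; linarith

lemma log_le_two_sqrt {d : ℝ} (hd : 1 ≤ d) : Real.log d ≤ 2 * Real.sqrt d - 2 := by
  have h0 : (0:ℝ) < d := by linarith
  have h1 : Real.log (Real.sqrt d) ≤ Real.sqrt d - 1 :=
    Real.log_le_sub_one_of_pos (Real.sqrt_pos.2 h0)
  have h2 : Real.log (Real.sqrt d) = Real.log d / 2 := Real.log_sqrt h0.le
  rw [h2] at h1
  linarith

/- ### the per-term bound for the Z sums -/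

lemma core_bound {d : ℝ} (hd2 : 2 ≤ d)
    (hcase : d = 2 ∨ d = 3 ∨ d = 4 ∨ 5 ≤ d) :
    (2 + 14.2 * Real.log d + 50.41 * Real.log d ^ 2) * Real.exp (-(7.1 * Real.log d))
      ≤ 0.54 / (d * (d - 1)) := by
  have hd0 : (0:ℝ) < d := by linarith
  have hE0 : 0 ≤ Real.exp (-(7.1 * Real.log d)) := (Real.exp_pos _).le
  have hL0 : 0 ≤ Real.log d := Real.log_nonneg (by linarith)
  rcases hcase with h | h | h | h
  · subst h
    have hE := exp_71_log2
    have hLu : Real.log 2 ≤ 0.6931471808 := Real.log_two_lt_d9.le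
    have hA : 2 + 14.2 * Real.log 2 + 50.41 * Real.log 2 ^ 2 ≤ 36.07 := by nlinarith
    have h2 : (2 + 14.2 * Real.log 2 + 50.41 * Real.log 2 ^ 2) * Real.exp (-(7.1 * Real.log 2))
        ≤ 36.07 * (1/136) := by
      apply mul_le_mul hA hE hE0 (by norm_num)
    calc _ ≤ (36.07:ℝ) * (1/136) := h2
      _ ≤ 0.54 / (2 * (2-1)) := by norm_num
  · subst h
    have hE := exp_71_log3
    have hLu := log3_le
    have hA : 2 + 14.2 * Real.log 3 + 50.41 * Real.log 3 ^ 2 ≤ 83.3 := by nlinarith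
    have h2 : (2 + 14.2 * Real.log 3 + 50.41 * Real.log 3 ^ 2) * Real.exp (-(7.1 * Real.log 3))
        ≤ 83.3 * (1/2400) := by
      apply mul_le_mul hA hE hE0 (by norm_num)
    calc _ ≤ (83.3:ℝ) * (1/2400) := h2
      _ ≤ 0.54 / (3 * (3-1)) := by norm_num
  · subst h
    have hE := exp_71_log4
    have hLu := log4_le
    have hA : 2 + 14.2 * Real.log 4 + 50.41 * Real.log 4 ^ 2 ≤ 118.6 := by nlinarith
    have h2 : (2 + 14.2 * Real.log 4 + 50.41 * Real.log 4 ^ 2) * Real.exp (-(7.1 * Real.log 4))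
        ≤ 118.6 * (1/18000) := by
      apply mul_le_mul hA hE hE0 (by norm_num)
    calc _ ≤ (118.6:ℝ) * (1/18000) := h2
      _ ≤ 0.54 / (4 * (4-1)) := by norm_num
  · -- d ≥ 5
    have hd1 : 1 ≤ d := by linarith
    set L := Real.log d with hLdef
    have hsq1 : 1 ≤ Real.sqrt d := by
      rw [show (1:ℝ) = Real.sqrt 1 by simp]
      exact Real.sqrt_le_sqrt hd1
    have hLs : L ≤ 2 * Real.sqrt d - 2 := log_le_two_sqrt hd1
    have hsqd : Real.sqrt d ^ 2 = d := Real.sq_sqrt hd0.le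
    have hL2 : L ^ 2 ≤ 4 * d := by nlinarith
    have hLd : L ≤ d := by
      have := Real.log_le_sub_one_of_pos hd0
      linarith
    have hE7 : Real.exp (-(7.1 * L)) ≤ 1 / d ^ 7 := by
      have h1 : Real.exp (-(7.1 * L)) ≤ Real.exp (-((7:ℕ) * L)) := by
        apply Real.exp_le_exp.2
        push_cast
        nlinarith
      have h2 : Real.exp (-((7:ℕ) * L)) = 1 / d ^ 7 := by
        rw [Real.exp_neg, Real.exp_nat_mul, Real.exp_log hd0, one_div]
      rw [← h2]; exact h1
    have hA : 2 + 14.2 * L + 50.41 * L ^ 2 ≤ 216.84 * d := by nlinarith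
    have hstep : (2 + 14.2 * L + 50.41 * L ^ 2) * Real.exp (-(7.1 * L))
        ≤ 216.84 * d * (1 / d ^ 7) := by
      apply mul_le_mul hA hE7 hE0 (by positivity)
    have hfin : 216.84 * d * (1 / d ^ 7) ≤ 0.54 / (d * (d - 1)) := by
      rw [mul_one_div, div_le_div_iff₀ (by positivity) (by nlinarith)]
      have h25 : 25 ≤ d ^ 2 := by nlinarith
      have hd4 : 625 ≤ d ^ 4 := by nlinarith [h25]
      nlinarith [pow_pos hd0 4, sq_nonneg d]
    exact hstep.trans hfin

lemma Zterm_bound {x : ℝ} (hx : 7.1 < x) (n : ℕ) :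
    2 * Zf (n+1) x + 2 * x * Z1f (n+1) x + x ^ 2 * Z2f (n+1) x
      ≤ 0.54 * (1 / (c n * (c n + 1))) := by
  set d : ℝ := c (n+1) with hd
  have hd2 : 2 ≤ d := by
    simp only [hd, c]
    push_cast
    linarith [Nat.cast_nonneg (α := ℝ) n]
  have hd0 : (0:ℝ) < d := by linarith
  set L : ℝ := Real.log d with hL
  have hL2 : Real.log 2 ≤ L := Real.log_le_log (by norm_num) hd2
  have hL0 : 0 ≤ L := Real.log_nonneg (by linarith)
  have hcc : c n * (c n + 1) = d * (d - 1) := by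
    simp only [hd, c]
    push_cast
    ring
  -- step (a): reduce x to 7.1
  have hu : 0 < x - 7.1 := by linarith
  have key_exp : Real.exp (-(x * L)) = Real.exp (-(7.1 * L)) * Real.exp (-((x - 7.1) * L)) := by
    rw [← Real.exp_add]; congr 1; ring
  have hxquad : x ^ 2 * Real.exp (-((x - 7.1) * L)) ≤ 7.1 ^ 2 := by
    have hb : x ≤ 7.1 * Real.exp ((x - 7.1) / 7.1) := by
      have h := Real.add_one_le_exp ((x - 7.1) / 7.1)
      have h2 := mul_le_mul_of_nonneg_left h (by norm_num : (0:ℝ) ≤ 7.1)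
      have h3 : (7.1:ℝ) * ((x - 7.1) / 7.1 + 1) = x := by ring
      linarith
    have hb2 : x ^ 2 ≤ 7.1 ^ 2 * Real.exp (2 * ((x - 7.1) / 7.1)) := by
      have hx0 : 0 < x := by linarith
      have he : Real.exp ((x-7.1)/7.1) ^ 2 = Real.exp (2 * ((x-7.1)/7.1)) := by
        rw [← Real.exp_nat_mul]
        norm_num
      calc x ^ 2 ≤ (7.1 * Real.exp ((x - 7.1) / 7.1)) ^ 2 := by
            apply pow_le_pow_left₀ hx0.le hb
        _ = 7.1 ^ 2 * Real.exp (2 * ((x-7.1)/7.1)) := by rw [mul_pow, he]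
    have hexple : Real.exp (2 * ((x - 7.1) / 7.1)) ≤ Real.exp ((x - 7.1) * L) := by
      apply Real.exp_le_exp.2
      have hl2 : (0.6931471803:ℝ) < Real.log 2 := Real.log_two_gt_d9
      have : (2:ℝ) / 7.1 ≤ L := by linarith
      have h9 : 2 * ((x - 7.1) / 7.1) = (x - 7.1) * (2 / 7.1) := by ring
      rw [h9]
      apply mul_le_mul_of_nonneg_left this hu.le
    calc x ^ 2 * Real.exp (-((x - 7.1) * L))
        ≤ (7.1 ^ 2 * Real.exp ((x - 7.1) * L)) * Real.exp (-((x - 7.1) * L)) := by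
          apply mul_le_mul_of_nonneg_right _ (Real.exp_pos _).le
          exact hb2.trans (by nlinarith [Real.exp_pos (2 * ((x-7.1)/7.1)), hexple])
      _ = 7.1 ^ 2 := by rw [mul_assoc, ← Real.exp_add]; simp
  have hxlin : x * Real.exp (-((x - 7.1) * L)) ≤ 7.1 := by
    have h1 : 0 < Real.exp (-((x - 7.1) * L)) := Real.exp_pos _
    have h2 : Real.exp (-((x - 7.1) * L)) ≤ 1 := by
      rw [Real.exp_le_one_iff]
      nlinarith
    nlinarith [hxquad, Real.exp_pos (-((x - 7.1) * L))]
  -- express the three terms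
  have hZfe : Zf (n+1) x = Real.exp (-(x * L)) := by
    simp only [Zf, hL, hd]
  have hZ1fe : Z1f (n+1) x = L * Real.exp (-(x * L)) := by
    simp only [Z1f, Zf, hL, hd]
  have hZ2fe : Z2f (n+1) x = L ^ 2 * Real.exp (-(x * L)) := by
    simp only [Z2f, Zf, hL, hd]
  have hE0 : 0 ≤ Real.exp (-(7.1 * L)) := (Real.exp_pos _).le
  have hxLle : Real.exp (-(x * L)) ≤ Real.exp (-(7.1 * L)) := by
    apply Real.exp_le_exp.2
    nlinarith
  have e1 : 2 * Zf (n+1) x ≤ 2 * Real.exp (-(7.1 * L)) := by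
    rw [hZfe]; linarith
  have e2 : 2 * x * Z1f (n+1) x ≤ 14.2 * (L * Real.exp (-(7.1 * L))) := by
    rw [hZ1fe, key_exp]
    have h1 : 2 * x * (L * (Real.exp (-(7.1 * L)) * Real.exp (-((x - 7.1) * L))))
        = 2 * L * (x * Real.exp (-((x - 7.1) * L))) * Real.exp (-(7.1 * L)) := by ring
    rw [h1]
    have h2 : 2 * L * (x * Real.exp (-((x - 7.1) * L))) ≤ 2 * L * 7.1 :=
      mul_le_mul_of_nonneg_left hxlin (by linarith)
    have := mul_le_mul_of_nonneg_right h2 hE0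
    calc 2 * L * (x * Real.exp (-((x - 7.1) * L))) * Real.exp (-(7.1 * L))
        ≤ 2 * L * 7.1 * Real.exp (-(7.1 * L)) := this
      _ = 14.2 * (L * Real.exp (-(7.1 * L))) := by ring
  have e3 : x ^ 2 * Z2f (n+1) x ≤ 50.41 * (L ^ 2 * Real.exp (-(7.1 * L))) := by
    rw [hZ2fe, key_exp]
    have h1 : x ^ 2 * (L ^ 2 * (Real.exp (-(7.1 * L)) * Real.exp (-((x - 7.1) * L))))
        = L ^ 2 * (x ^ 2 * Real.exp (-((x - 7.1) * L))) * Real.exp (-(7.1 * L)) := by ring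
    rw [h1]
    have h2 : L ^ 2 * (x ^ 2 * Real.exp (-((x - 7.1) * L))) ≤ L ^ 2 * 7.1 ^ 2 :=
      mul_le_mul_of_nonneg_left hxquad (by positivity)
    have := mul_le_mul_of_nonneg_right h2 hE0
    calc L ^ 2 * (x ^ 2 * Real.exp (-((x - 7.1) * L))) * Real.exp (-(7.1 * L))
        ≤ L ^ 2 * 7.1 ^ 2 * Real.exp (-(7.1 * L)) := this
      _ = 50.41 * (L ^ 2 * Real.exp (-(7.1 * L))) := by norm_num; ring
  -- case analysis on d
  have hdval : d = (n:ℝ) + 2 := by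
    rw [hd]; simp only [c]; push_cast; ring
  have hcase : d = 2 ∨ d = 3 ∨ d = 4 ∨ 5 ≤ d := by
    rcases n with _ | _ | _ | m
    · left; norm_num [hdval]
    · right; left; norm_num [hdval]
    · right; right; left; norm_num [hdval]
    · right; right; right
      rw [hdval]
      have h0 : (0:ℝ) ≤ (m:ℝ) := Nat.cast_nonneg m
      push_cast
      linarith
  have hcore := core_bound hd2 hcase
  rw [hcc, mul_one_div]
  rw [← hL] at hcore
  calc 2 * Zf (n+1) x + 2 * x * Z1f (n+1) x + x ^ 2 * Z2f (n+1) x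
      ≤ (2 + 14.2 * L + 50.41 * L ^ 2) * Real.exp (-(7.1 * L)) := by
        have := add_le_add (add_le_add e1 e2) e3
        calc 2 * Zf (n+1) x + 2 * x * Z1f (n+1) x + x ^ 2 * Z2f (n+1) x ≤
            2 * Real.exp (-(7.1 * L)) + 14.2 * (L * Real.exp (-(7.1 * L)))
              + 50.41 * (L ^ 2 * Real.exp (-(7.1 * L))) := this
          _ = (2 + 14.2 * L + 50.41 * L ^ 2) * Real.exp (-(7.1 * L)) := by ring
    _ ≤ 0.54 / (d * (d - 1)) := hcore

set_option maxHeartbeats 1000000 in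
lemma Zsum_bound {x : ℝ} (hx : 7.1 < x) :
    2 * (Z x - 1) + 2 * x * Z1 x + x ^ 2 * Z2 x ≤ 0.54 := by
  have hx2 : (2:ℝ) ≤ x := by linarith
  have sZ : Summable (fun n => Zf n x) := summable_Zf hx2
  have sZ1 : Summable (fun n => Z1f n x) := summable_Z1f (by linarith)
  have sZ2 : Summable (fun n => Z2f n x) := summable_Z2f (by linarith)
  have hZs : Z x = 1 + ∑' n, Zf (n+1) x := by
    rw [Z, Summable.tsum_eq_zero_add sZ]
    congr 1
    simp [Zf, c]
  have hZ1s : Z1 x = ∑' n, Z1f (n+1) x := by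
    rw [Z1, Summable.tsum_eq_zero_add sZ1]
    have : Z1f 0 x = 0 := by simp [Z1f, c]
    rw [this, zero_add]
  have hZ2s : Z2 x = ∑' n, Z2f (n+1) x := by
    rw [Z2, Summable.tsum_eq_zero_add sZ2]
    have : Z2f 0 x = 0 := by simp [Z2f, c]
    rw [this, zero_add]
  have sZs : Summable (fun n => Zf (n+1) x) := (summable_nat_add_iff 1).2 sZ
  have sZ1s : Summable (fun n => Z1f (n+1) x) := (summable_nat_add_iff 1).2 sZ1
  have sZ2s : Summable (fun n => Z2f (n+1) x) := (summable_nat_add_iff 1).2 sZ2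
  have hcomb : 2 * (Z x - 1) + 2 * x * Z1 x + x ^ 2 * Z2 x
      = ∑' n, (2 * Zf (n+1) x + 2 * x * Z1f (n+1) x + x ^ 2 * Z2f (n+1) x) := by
    rw [hZs, hZ1s, hZ2s]
    rw [Summable.tsum_add (((sZs.mul_left 2).add (sZ1s.mul_left (2*x)))) (sZ2s.mul_left (x^2)),
      Summable.tsum_add (sZs.mul_left 2) (sZ1s.mul_left (2*x)), tsum_mul_left, tsum_mul_left,
      tsum_mul_left]
    ring
  rw [hcomb]
  have hsum3 : Summable (fun n => 2 * Zf (n+1) x + 2 * x * Z1f (n+1) x + x ^ 2 * Z2f (n+1) x) := by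
    apply Summable.congr (((sZs.mul_left 2).add (sZ1s.mul_left (2*x))).add (sZ2s.mul_left (x^2)))
    intro n
    simp only [Pi.add_apply]
  have hle := Summable.tsum_le_tsum (Zterm_bound hx) hsum3 (summable_tele.mul_left 0.54)
  have htot : ∑' n : ℕ, (0.54:ℝ) * (1 / (c n * (c n + 1))) = 0.54 := by
    rw [tsum_mul_left, hasSum_tele.tsum_eq, mul_one]
  calc _ ≤ ∑' n : ℕ, (0.54:ℝ) * (1 / (c n * (c n + 1))) := hle
    _ = 0.54 := htot

lemma Psum_bound {x : ℝ} (hx : 7.1 < x) :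
    x ^ 2 * P2 x - 2 * x * P1 x + 2 * P x ≤ phi x + phi (x/2) := by
  have hx1 : (1:ℝ) ≤ x := by linarith
  have hx0 : (0:ℝ) ≤ x := by linarith
  have sP : Summable (fun n => Pf n x) := summable_Pf hx1
  have sP1 : Summable (fun n => P1f n x) := summable_P1f hx1
  have sP2 : Summable (fun n => P2f n x) := summable_P2f hx0
  set q : ℕ → ℝ := fun n => x ^ 2 * P2f n x - 2 * x * P1f n x + 2 * Pf n x with hq
  have hq_eq : ∀ n, q n = phi (x / c n) := by
    intro n
    have hc := c_pos n
    have hcx : (0:ℝ) < c n + x := by linarith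
    simp only [hq, phi, P2f, P1f, Pf]
    have e1 : 1 + x / c n = (c n + x) / c n := by field_simp
    rw [e1]
    field_simp
    ring
  have hq_nonpos : ∀ n, q n ≤ 0 := by
    intro n
    rw [hq_eq n]
    exact phi_nonpos (div_nonneg hx0 (c_pos n).le)
  have hqsum : Summable q := by
    apply Summable.add (Summable.sub (sP2.mul_left (x^2)) (sP1.mul_left (2*x)))
      (sP.mul_left 2)
  have htsum : ∑' n, q n = x ^ 2 * P2 x - 2 * x * P1 x + 2 * P x := by
    rw [P2, P1, P]
    rw [show q = fun n => (x^2 * P2f n x - 2*x*P1f n x) + 2*Pf n x from rfl]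
    rw [Summable.tsum_add ((sP2.mul_left (x^2)).sub (sP1.mul_left (2*x))) (sP.mul_left 2),
      Summable.tsum_sub (sP2.mul_left (x^2)) (sP1.mul_left (2*x)), tsum_mul_left, tsum_mul_left]
    try rw [tsum_mul_left]
  have hfirsttwo : ∑' n, q n ≤ q 0 + q 1 := by
    have h := Summable.sum_le_tsum ({0, 1} : Finset ℕ)
      (fun i _ => neg_nonneg.2 (hq_nonpos i)) hqsum.neg
    rw [tsum_neg] at h
    have h2 : ∑ i ∈ ({0, 1} : Finset ℕ), -q i = -q 0 + -q 1 := by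
      rw [Finset.sum_pair (by norm_num)]
    rw [h2] at h
    linarith
  have hq0 : q 0 = phi x := by
    rw [hq_eq 0]
    have : c 0 = 1 := by simp [c]
    rw [this, div_one]
  have hq1 : q 1 = phi (x/2) := by
    rw [hq_eq 1]
    have : c 1 = 2 := by simp [c]; norm_num
    rw [this]
  rw [← htsum]
  rw [hq0, hq1] at hfirsttwo
  exact hfirsttwo

lemma Num_neg {x : ℝ} (hx : 7.1 < x) :
    x ^ 2 * ddg x - 2 * x * dg x + 2 * gg x < 0 := by
  have hx2 : (2:ℝ) ≤ x := by linarith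
  have hZge1 : 1 ≤ Z x := one_le_Z hx2
  have hZ1nn : 0 ≤ Z1 x := tsum_nonneg (fun n => Z1f_nonneg n x)
  have hZ2nn : 0 ≤ Z2 x := tsum_nonneg (fun n => Z2f_nonneg n x)
  have key : x ^ 2 * ddg x - 2 * x * dg x + 2 * gg x
      = (x ^ 2 * ((Z2 x * Z x - Z1 x ^ 2) / Z x ^ 2) + 2 * x * (Z1 x / Z x)
          + 2 * Real.log 2 + 2 * Real.log (Z x))
        + (x ^ 2 * P2 x - 2 * x * P1 x + 2 * P x) := by
    simp only [ddg, dg, gg]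
    ring
  rw [key]
  -- bounds on the Z part
  have bound1 : (Z2 x * Z x - Z1 x ^ 2) / Z x ^ 2 ≤ Z2 x := by
    rw [div_le_iff₀ (by positivity)]
    nlinarith [sq_nonneg (Z1 x),
      mul_nonneg (mul_nonneg hZ2nn (by linarith : (0:ℝ) ≤ Z x))
        (by linarith : (0:ℝ) ≤ Z x - 1)]
  have bound1' : x ^ 2 * ((Z2 x * Z x - Z1 x ^ 2) / Z x ^ 2) ≤ x ^ 2 * Z2 x :=
    mul_le_mul_of_nonneg_left bound1 (by positivity)
  have bound2 : Z1 x / Z x ≤ Z1 x := div_le_self hZ1nn hZge1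
  have bound2' : 2 * x * (Z1 x / Z x) ≤ 2 * x * Z1 x :=
    mul_le_mul_of_nonneg_left bound2 (by positivity)
  have bound3 : Real.log (Z x) ≤ Z x - 1 :=
    Real.log_le_sub_one_of_pos (by linarith)
  have hZsum := Zsum_bound hx
  have hPsum := Psum_bound hx
  -- phi monotonicity
  have hphix : phi x ≤ phi 7.1 :=
    phi_antitoneOn (Set.mem_Ici.2 (by norm_num)) (Set.mem_Ici.2 (by linarith)) (by linarith)
  have hphix2 : phi (x/2) ≤ phi 3.55 :=
    phi_antitoneOn (Set.mem_Ici.2 (by norm_num)) (Set.mem_Ici.2 (by linarith)) (by linarith)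
  -- numeric values of phi
  have e71 : phi 7.1 = 7.1 ^ 2 / 8.1 ^ 2 + 2 * 7.1 / 8.1 - 2 * Real.log 8.1 := by
    simp only [phi]
    norm_num
  have e355 : phi 3.55 = 3.55 ^ 2 / 4.55 ^ 2 + 2 * 3.55 / 4.55 - 2 * Real.log 4.55 := by
    simp only [phi]
    norm_num
  have hlog81 : 3 * 0.6931471803 ≤ Real.log 8.1 := by
    have h8 : Real.log 8 = 3 * Real.log 2 := by
      rw [show (8:ℝ) = 2 ^ 3 by norm_num, Real.log_pow]
      push_cast
      ring
    have hm : Real.log 8 ≤ Real.log 8.1 := Real.log_le_log (by norm_num) (by norm_num)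
    have := Real.log_two_gt_d9
    linarith
  have hlog455 : 2 * 0.6931471803 + 0.1375 / 1.1375 ≤ Real.log 4.55 := by
    have h4 : Real.log 4 = 2 * Real.log 2 := by
      rw [show (4:ℝ) = 2 ^ 2 by norm_num, Real.log_pow]
      push_cast
      ring
    have hm : Real.log 4.55 = Real.log 4 + Real.log 1.1375 := by
      rw [← Real.log_mul (by norm_num) (by norm_num)]
      norm_num
    have hsm : (0.1375:ℝ) / 1.1375 ≤ Real.log 1.1375 := by
      have h := log_add_one_ge (t := 0.1375) (by norm_num)
      norm_num at h ⊢
      linarith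
    have := Real.log_two_gt_d9
    linarith
  have hlog2u : Real.log 2 ≤ 0.6931471808 := Real.log_two_lt_d9.le
  linarith

end ThetaAux

theorem theta_log_concave (x : ℝ) (hx : 7.1 < x) :
    iteratedDeriv 2 (fun y => Real.log (theta y)) x < 0 := by
  classical
  open ThetaAux in
  have hR : (8:ℝ) < x + 1 := by linarith
  have hxt : x ∈ Set.Ioo (7:ℝ) (x+1) := by
    constructor <;> [linarith; linarith]
  set f : ℝ → ℝ := fun y => Real.log (theta y) with hf
  set D1 : ℝ → ℝ := fun y => (ThetaAux.dg y * y - ThetaAux.gg y) / y ^ 2 with hD1def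
  have hD1 : ∀ y ∈ Set.Ioo (7:ℝ) (x+1), HasDerivAt f (D1 y) y := by
    intro y hy
    have hyne : y ≠ 0 := by
      have := hy.1; intro h; rw [h] at this; norm_num at this
    have hq := (ThetaAux.hasDerivAt_gg hR hy).div (hasDerivAt_id y) hyne
    simp only [id_eq] at hq
    have hev : f =ᶠ[nhds y] fun z => ThetaAux.gg z / z := by
      filter_upwards [isOpen_Ioo.mem_nhds hy] with z hz
      exact ThetaAux.log_theta_eq (by linarith [hz.1])
    have hq' := hq.congr_of_eventuallyEq hev
    refine hq'.congr_deriv ?_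
    rw [hD1def]
    ring
  have hderiv1 : deriv f =ᶠ[nhds x] D1 := by
    filter_upwards [isOpen_Ioo.mem_nhds hxt] with y hy
    exact (hD1 y hy).deriv
  have hD2 : HasDerivAt D1
      ((x ^ 2 * ThetaAux.ddg x - 2 * x * ThetaAux.dg x + 2 * ThetaAux.gg x) / x ^ 3) x := by
    have hxne : x ≠ 0 := by positivity
    have hnum : HasDerivAt (fun y => ThetaAux.dg y * y - ThetaAux.gg y)
        (ThetaAux.ddg x * x + ThetaAux.dg x * 1 - ThetaAux.dg x) x :=
      ((ThetaAux.hasDerivAt_dg hR hxt).mul (hasDerivAt_id x)).sub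
        (ThetaAux.hasDerivAt_gg hR hxt)
    have hden : HasDerivAt (fun y : ℝ => y ^ 2) (2 * x) x := by
      simpa using hasDerivAt_pow 2 x
    have hq := hnum.div hden (by positivity)
    refine hq.congr_deriv ?_
    field_simp
    ring
  have e2 : iteratedDeriv 2 f x = deriv (deriv f) x := by
    rw [iteratedDeriv_succ, iteratedDeriv_one]
  rw [e2, hderiv1.deriv_eq, hD2.deriv]
  apply div_neg_of_neg_of_pos (ThetaAux.Num_neg hx) (by positivity)
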